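/- Let 1, 2, ..., 2k+1 be the vertices of an odd cycle in a graph and s ∈ R^W a vector with nonzero entries. Define C_{ij} = s_i s_j. Then s_1^2 = C_{1,2k+1} · C_{2k+1,2k}^{-1} · C_{2k,2k-1} · C_{2k-1,2k-2}^{-1} ⋯ C_{2,1}, i.e., the alternating product of edge correlations around an odd cycle equals the square of the skill at the starting vertex; in particular |s_1| is recoverable from the correlations along the cycle. -/

import Mathlib

lemma aux5 (k : ℕ) (s : ℕ → ℝ) (hs : ∀ i, s i ≠ 0) :
    ∏ m ∈ Finset.Icc 1 (2 * k), (s (m + 1) * s m) ^ (if Odd m then (1 : ℤ) else -1)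
      = s 1 / s (2 * k + 1) := by
  induction k with
  | zero => simp [div_self (hs 1)]
  | succ n ih =>
    have h1 : (1 : ℕ) ≤ 2 * n + 1 := by omega
    have h2 : (1 : ℕ) ≤ 2 * n + 2 := by omega
    have e : 2 * (n + 1) = (2 * n + 1) + 1 := by ring
    rw [e, Finset.prod_Icc_succ_top h2, Finset.prod_Icc_succ_top h1, ih]
    have ho : Odd (2 * n + 1) := ⟨n, by ring⟩
    have he : ¬ Odd (2 * n + 1 + 1) := by rw [Nat.odd_iff]; omega
    rw [if_pos ho, if_neg he, zpow_one, zpow_neg_one, eq_div_iff (hs _)]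
    have ha : s (2 * n + 1) ≠ 0 := hs _
    have hb : s (2 * n + 1 + 1) ≠ 0 := hs _
    have hc : s (2 * n + 1 + 1 + 1) ≠ 0 := hs _
    field_simp

/-- Around an odd cycle with vertices `1, 2, …, 2k+1` and correlations `C_{ij} = s_i s_j`,
the alternating product of edge correlations recovers the square of the skill at the
starting vertex: `s_1² = C_{1,2k+1} · C_{2k+1,2k}⁻¹ · C_{2k,2k-1} ⋯ C_{2,1}`. -/
theorem stmt5 (k : ℕ) (hk : 0 < k) (s : ℕ → ℝ) (hs : ∀ i, s i ≠ 0) :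
    (s 1) ^ 2 = (s 1 * s (2 * k + 1)) *
      ∏ m ∈ Finset.Icc 1 (2 * k), (s (m + 1) * s m) ^ (if Odd m then (1 : ℤ) else -1) := by
  rw [aux5 k s hs, mul_comm (s 1) (s (2*k+1)), mul_assoc, div_eq_mul_inv,
    ← mul_assoc (s 1), ← sq, mul_comm, mul_assoc, inv_mul_cancel₀ (hs _), mul_one]
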